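/- The set B₂ is nowhere dense in the space H(A₂), and B₂ with the subspace topology inherited from H(A₂) is a countably infinite discrete space, i.e., it is homeomorphic to the space ℕ of natural numbers with the discrete topology. -/

import Mathlib

open Set TopologicalSpace Topology

/-- The Hattori topology τ(A) on ℝ: generated by the Euclidean open sets together with
all sets [x, x+ε) with x ∈ ℝ \ A and ε > 0. -/
def hattori (A : Set ℝ) : TopologicalSpace ℝ :=
  TopologicalSpace.generateFrom
    ({s : Set ℝ | IsOpen s} ∪ {s : Set ℝ | ∃ x ∉ A, ∃ ε > 0, s = Set.Ico x (x + ε)})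

/-- `B₂`: the set of right endpoints of the closed intervals appearing in the standard
middle-thirds construction of the Cantor set. -/
def B2 : Set ℝ :=
  {x | ∃ n : ℕ, ∃ c : ℕ → ℝ, (∀ i, c i = 0 ∨ c i = 2) ∧
    x = (∑ i ∈ Finset.range n, c i / 3 ^ (i + 1)) + 1 / 3 ^ n}

/-- `A₂ = ℝ \ B₂`. -/
def A2 : Set ℝ := B2ᶜ

lemma pow_div_pow (a b : ℕ) (h : a ≤ b) : (3:ℝ) ^ b / 3 ^ a = 3 ^ (b - a) := by
  rw [eq_comm, eq_div_iff (by positivity), ← pow_add, Nat.sub_add_cancel h]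

lemma term_mul (c : ℝ) (a n : ℕ) (h : a ≤ n) :
    c / 3 ^ a * 3 ^ n = c * 3 ^ (n - a) := by
  rw [div_mul_eq_mul_div, mul_div_assoc, pow_div_pow a n h]

lemma geom_Ico (n m : ℕ) (h : n ≤ m) :
    (∑ i ∈ Finset.Ico n m, (2:ℝ) / 3 ^ (i+1)) = 1/3^n - 1/3^m := by
  induction m with
  | zero =>
    have : n = 0 := Nat.le_zero.mp h
    subst this; simp
  | succ m ih =>
    rcases Nat.lt_or_ge m n with h1 | h1
    · have : n = m + 1 := by omega
      subst this; simp
    · rw [Finset.sum_Ico_succ_top h1, ih h1]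
      have h3 : (3:ℝ) ^ (m+1) = 3 * 3 ^ m := by ring
      field_simp
      ring

lemma c_nonneg {c : ℕ → ℝ} (hc : ∀ i, c i = 0 ∨ c i = 2) (i : ℕ) : 0 ≤ c i := by
  rcases hc i with h | h <;> rw [h] <;> norm_num

lemma c_le_two {c : ℕ → ℝ} (hc : ∀ i, c i = 0 ∨ c i = 2) (i : ℕ) : c i ≤ 2 := by
  rcases hc i with h | h <;> rw [h] <;> norm_num

/-- The key "gap" lemma: no element of `B2` lies strictly between `(3j+1)/3^n` and
`(3j+2)/3^n`. -/
lemma not_mem_B2 (n : ℕ) (j : ℤ) (x : ℝ)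
    (h1 : (3*j+1)/3^n < x) (h2 : x < (3*j+2)/3^n) : x ∉ B2 := by
  rintro ⟨m, c, hc, rfl⟩
  have h3 : (0:ℝ) < 3 ^ n := by positivity
  rw [div_lt_iff₀ h3] at h1
  rw [lt_div_iff₀ h3] at h2
  set d : ℕ → ℤ := fun i => if c i = 0 then 0 else 2 with hd_def
  have hd : ∀ i, ((d i : ℤ) : ℝ) = c i := by
    intro i
    rcases hc i with h | h <;> simp [hd_def, h]
  have hterm : ∀ i : ℕ, i + 1 ≤ n →
      c i / 3 ^ (i+1) * 3 ^ n = ((d i : ℤ) : ℝ) * 3 ^ (n - (i+1)) := by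
    intro i hi
    rw [term_mul _ _ _ hi, hd]
  rcases le_or_gt m n with hmn | hmn
  · -- `3^n x` is an integer; no integer lies in the open interval `(3j+1, 3j+2)`.
    set M : ℤ := (∑ i ∈ Finset.range m, d i * 3 ^ (n - (i+1))) + 3 ^ (n - m) with hM
    have key : (M : ℝ) = ((∑ i ∈ Finset.range m, c i / 3 ^ (i + 1)) + 1 / 3 ^ m) * 3 ^ n := by
      rw [add_mul, Finset.sum_mul, term_mul 1 m n hmn, one_mul]
      push_cast [hM]
      congr 1
      exact (Finset.sum_congr rfl fun i hi => by
        rw [hterm i (by have := Finset.mem_range.mp hi; omega)]).symm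
    rw [← key] at h1 h2
    have h1' : 3*j+1 < M := by exact_mod_cast h1
    have h2' : M < 3*j+2 := by exact_mod_cast h2
    omega
  · -- `3^n x = N + f` with `N ≡ 0 or 2 (mod 3)` and `0 < f ≤ 1`.
    set N : ℤ := ∑ i ∈ Finset.range n, d i * 3 ^ (n - (i+1)) with hN
    set g : ℝ := (∑ i ∈ Finset.Ico n m, c i / 3 ^ (i + 1)) + 1 / 3 ^ m with hg
    have hsplit : ((∑ i ∈ Finset.range m, c i / 3 ^ (i + 1)) + 1 / 3 ^ m) * 3 ^ n
        = (N : ℝ) + g * 3 ^ n := by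
      rw [← Finset.sum_range_add_sum_Ico _ hmn.le]
      have hNe : (N : ℝ) = (∑ i ∈ Finset.range n, c i / 3 ^ (i + 1)) * 3 ^ n := by
        rw [Finset.sum_mul]
        push_cast [hN]
        exact (Finset.sum_congr rfl fun i hi => by
          rw [hterm i (by have := Finset.mem_range.mp hi; omega)]).symm
      rw [hNe, hg]
      ring
    rw [hsplit] at h1 h2
    have hgpos : 1/3^m ≤ g := by
      rw [hg]
      refine le_add_of_nonneg_left ?_
      exact Finset.sum_nonneg fun i _ => div_nonneg (c_nonneg hc i) (by positivity)
    have hmpos : (0:ℝ) < 1/3^m := by positivity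
    have hgle : g ≤ 1/3^n := by
      rw [hg]
      have hsum : (∑ i ∈ Finset.Ico n m, c i / 3 ^ (i + 1))
          ≤ ∑ i ∈ Finset.Ico n m, (2:ℝ) / 3 ^ (i+1) :=
        Finset.sum_le_sum fun i _ => by
          gcongr
          exact c_le_two hc i
      have := geom_Ico n m hmn.le
      linarith
    have hf1 : g * 3^n ≤ 1 := by
      calc g * 3^n ≤ (1/3^n) * 3^n := by gcongr
        _ = 1 := by field_simp
    have hf0 : 0 < g * 3^n := mul_pos (lt_of_lt_of_le hmpos hgpos) h3
    have hub : N < 3*j+2 := by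
      have : (N : ℝ) < 3*j+2 := by linarith
      exact_mod_cast this
    have hlb : 3*j < N := by
      have : (3*j : ℝ) < N := by linarith
      exact_mod_cast this
    have hN31 : N = 3*j+1 := by omega
    rcases Nat.eq_zero_or_pos n with hn0 | hn0
    · subst hn0
      simp [hN] at hN31
      omega
    · obtain ⟨k, hk⟩ : ∃ k, n = k + 1 := ⟨n-1, by omega⟩
      subst hk
      have hsplitN : N = 3 * (∑ i ∈ Finset.range k, d i * 3 ^ (k - (i+1))) + d k := by
        rw [hN, Finset.sum_range_succ]
        have h0 : k + 1 - (k + 1) = 0 := by omega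
        rw [h0, pow_zero, mul_one, Finset.mul_sum]
        congr 1
        refine Finset.sum_congr rfl fun i hi => ?_
        have hik : i < k := Finset.mem_range.mp hi
        have he : k + 1 - (i+1) = (k - (i+1)) + 1 := by omega
        rw [he, pow_succ]
        ring
      have hdk : d k = 0 ∨ d k = 2 := by
        rcases hc k with h | h <;> simp [hd_def, h]
      omega

/-- Every element of `B2` has the form `(3j+1)/3^n`. -/
lemma B2_repr (m : ℕ) (c : ℕ → ℝ) (hc : ∀ i, c i = 0 ∨ c i = 2) :
    ∃ n : ℕ, ∃ j : ℤ,
      (∑ i ∈ Finset.range m, c i / 3 ^ (i + 1)) + 1 / 3 ^ m = (3*j+1)/3^n := by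
  induction m with
  | zero => exact ⟨0, 0, by norm_num⟩
  | succ m ih =>
    rcases hc m with h0 | h2
    · -- digit 0 : explicit representation at level m+1
      set d : ℕ → ℤ := fun i => if c i = 0 then 0 else 2 with hd_def
      have hd : ∀ i, ((d i : ℤ) : ℝ) = c i := by
        intro i
        rcases hc i with h | h <;> simp [hd_def, h]
      refine ⟨m+1, ∑ i ∈ Finset.range m, d i * 3 ^ (m - (i+1)), ?_⟩
      have h3 : (0:ℝ) < 3 ^ (m+1) := by positivity
      rw [eq_comm, div_eq_iff (ne_of_gt h3), eq_comm]
      rw [Finset.sum_range_succ, h0]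
      rw [add_mul, add_mul, Finset.sum_mul, term_mul 1 (m+1) (m+1) le_rfl, one_mul]
      push_cast
      have h00 : (0:ℝ) / 3 ^ (m+1) * 3 ^ (m+1) = 0 := by
        rw [zero_div, zero_mul]
      rw [h00, add_zero, Nat.sub_self, pow_zero, Finset.mul_sum]
      congr 1
      refine Finset.sum_congr rfl fun i hi => ?_
      have him : i < m := Finset.mem_range.mp hi
      rw [term_mul _ (i+1) (m+1) (by omega), hd]
      have he : m + 1 - (i+1) = (m - (i+1)) + 1 := by omega
      rw [he, pow_succ]
      ring
    · -- digit 2 : collapses to level m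
      have hcollapse : (∑ i ∈ Finset.range (m+1), c i / 3 ^ (i + 1)) + 1 / 3 ^ (m+1)
          = (∑ i ∈ Finset.range m, c i / 3 ^ (i + 1)) + 1 / 3 ^ m := by
        rw [Finset.sum_range_succ, h2]
        have h3 : (3:ℝ) ^ (m+1) = 3 * 3 ^ m := by ring
        field_simp
        ring
      rw [hcollapse]
      exact ih

/-- In any interval `(y, y+δ)` there is a gap interval `((3j+1)/3^n, (3j+2)/3^n)`. -/
lemma exists_gap (y δ : ℝ) (hδ : 0 < δ) :
    ∃ n : ℕ, ∃ j : ℤ, y < (3*j+1)/3^n ∧ (3*j+2)/3^n < y + δ := by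
  obtain ⟨n, hn⟩ : ∃ n : ℕ, (5:ℝ)/δ < 3 ^ n := pow_unbounded_of_one_lt _ (by norm_num)
  have h3 : (0:ℝ) < 3 ^ n := by positivity
  have h5 : 5 < 3 ^ n * δ := by
    rw [div_lt_iff₀ hδ] at hn
    linarith
  refine ⟨n, ⌊y * 3^n / 3⌋ + 1, ?_, ?_⟩
  · rw [lt_div_iff₀ h3]
    have hfl := Int.lt_floor_add_one (y * 3^n / 3)
    push_cast
    linarith
  · rw [div_lt_iff₀ h3]
    have hfl := Int.floor_le (y * 3^n / 3)
    push_cast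
    nlinarith

/-- Every Hattori-open set containing `y` contains a right half-open interval at `y`. -/
lemma genOpen_Ico {A : Set ℝ} {U : Set ℝ}
    (hU : TopologicalSpace.GenerateOpen
      ({s : Set ℝ | IsOpen s} ∪ {s : Set ℝ | ∃ x ∉ A, ∃ ε > 0, s = Set.Ico x (x + ε)}) U) :
    ∀ y ∈ U, ∃ δ > 0, Set.Ico y (y+δ) ⊆ U := by
  induction hU with
  | basic s hs =>
    rcases hs with hs | ⟨x, _, ε, hε, rfl⟩
    · intro y hy
      have hs' : IsOpen s := hs
      rcases Metric.isOpen_iff.mp hs' y hy with ⟨r, hr, hball⟩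
      refine ⟨r, hr, fun z hz => hball ?_⟩
      rw [Real.ball_eq_Ioo]
      exact ⟨by linarith [hz.1], hz.2⟩
    · intro y hy
      refine ⟨x + ε - y, by linarith [hy.2], fun z hz => ?_⟩
      exact ⟨le_trans hy.1 hz.1, by linarith [hz.2]⟩
  | univ => exact fun y _ => ⟨1, one_pos, fun z _ => trivial⟩
  | inter s t _ _ ihs iht =>
    intro y hy
    obtain ⟨δ₁, hδ₁, h₁⟩ := ihs y hy.1
    obtain ⟨δ₂, hδ₂, h₂⟩ := iht y hy.2
    refine ⟨min δ₁ δ₂, lt_min hδ₁ hδ₂, fun z hz => ?_⟩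
    exact ⟨h₁ ⟨hz.1, lt_of_lt_of_le hz.2 (by linarith [min_le_left δ₁ δ₂])⟩,
      h₂ ⟨hz.1, lt_of_lt_of_le hz.2 (by linarith [min_le_right δ₁ δ₂])⟩⟩
  | sUnion S _ ih =>
    rintro y ⟨s, hsS, hys⟩
    obtain ⟨δ, hδ, h⟩ := ih s hsS y hys
    exact ⟨δ, hδ, fun z hz => ⟨s, hsS, h hz⟩⟩

lemma B2_isolated (x : ℝ) (hx : x ∈ B2) :
    ∃ U : Set ℝ, IsOpen[hattori A2] U ∧ U ∩ B2 = {x} := by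
  obtain ⟨m, c, hc, hxe⟩ := hx
  obtain ⟨n, j, hrep⟩ := B2_repr m c hc
  rw [← hxe] at hrep
  have hxB2 : x ∈ B2 := ⟨m, c, hc, hxe⟩
  have h3 : (0:ℝ) < 3 ^ n := by positivity
  refine ⟨Set.Ico x (x + 1/3^n), ?_, ?_⟩
  · exact TopologicalSpace.GenerateOpen.basic _
      (Or.inr ⟨x, by simp [A2, hxB2], 1/3^n, by positivity, rfl⟩)
  · ext z
    simp only [Set.mem_inter_iff, Set.mem_Ico, Set.mem_singleton_iff]
    constructor
    · rintro ⟨⟨hz1, hz2⟩, hzB2⟩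
      by_contra hne
      have hlt : x < z := lt_of_le_of_ne hz1 (Ne.symm hne)
      refine not_mem_B2 n j z ?_ ?_ hzB2
      · rw [← hrep]; exact hlt
      · have he : x + 1/3^n = (3*j+2)/3^n := by
          rw [hrep]
          field_simp
          ring
        rw [← he]
        exact hz2
    · rintro rfl
      exact ⟨⟨le_refl z, by linarith [show (0:ℝ) < 1/3^n by positivity]⟩, hxB2⟩

lemma B2_countable : B2.Countable := by
  have hsub : B2 ⊆ Set.range ((↑) : ℚ → ℝ) := by
    rintro x ⟨m, c, hc, rfl⟩
    refine ⟨(∑ i ∈ Finset.range m, (if c i = 0 then (0:ℚ) else 2) / 3 ^ (i + 1)) + 1 / 3 ^ m, ?_⟩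
    push_cast
    congr 1
    refine Finset.sum_congr rfl fun i _ => ?_
    rcases hc i with h | h <;> simp [h]
  exact (Set.countable_range _).mono hsub

lemma B2_infinite : B2.Infinite := by
  refine Set.infinite_of_injective_forall_mem
    (f := fun k : ℕ => (∑ i ∈ Finset.range k, (0:ℝ) / 3 ^ (i + 1)) + 1 / 3 ^ k) ?_ ?_
  · intro a b hab
    simp only [zero_div, Finset.sum_const_zero, zero_add] at hab
    have h3a : (0:ℝ) < 3 ^ a := by positivity
    have h3b : (0:ℝ) < 3 ^ b := by positivity
    rw [one_div, one_div, inv_inj] at hab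
    have h3n : (3:ℕ) ^ a = 3 ^ b := by exact_mod_cast hab
    exact Nat.pow_right_injective (by norm_num) h3n
  · intro k
    exact ⟨k, fun _ => 0, fun i => Or.inl rfl, rfl⟩

/-- B₂ is nowhere dense in H(A₂), and B₂ with the subspace topology from H(A₂)
is homeomorphic to ℕ with the discrete topology. -/
theorem B2_nowhereDense_and_homeomorphic_nat :
    @IsNowhereDense ℝ (hattori A2) B2 ∧
    Nonempty (@Homeomorph ↥B2 ℕ
      (TopologicalSpace.induced ((↑) : B2 → ℝ) (hattori A2)) ⊥) := by
  constructor
  · -- nowhere dense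
    show @interior ℝ (hattori A2) (@closure ℝ (hattori A2) B2) = ∅
    have hmem : (closure B2)ᶜ ∈ {s : Set ℝ | IsOpen s} := by
      show IsOpen (closure B2)ᶜ
      exact isClosed_closure.isOpen_compl
    have hKclosed : @IsClosed ℝ (hattori A2) (closure B2) :=
      @IsClosed.mk ℝ (hattori A2) (closure B2)
        (TopologicalSpace.GenerateOpen.basic _ (Or.inl hmem))
    have hclsub : @closure ℝ (hattori A2) B2 ⊆ closure B2 :=
      @closure_minimal ℝ (hattori A2) B2 (closure B2) subset_closure hKclosed
    rw [Set.eq_empty_iff_forall_notMem]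
    intro y hy
    obtain ⟨U, hUsub, hUopen, hyU⟩ :=
      (@mem_interior ℝ (hattori A2) _ _).mp hy
    obtain ⟨δ, hδ, hIco⟩ := genOpen_Ico hUopen y hyU
    obtain ⟨n, j, hgap1, hgap2⟩ := exists_gap y δ hδ
    have h3 : (0:ℝ) < 3 ^ n := by positivity
    have hab : (3*(j:ℝ)+1)/3^n < (3*(j:ℝ)+2)/3^n := by
      rw [div_lt_div_iff₀ h3 h3]
      nlinarith
    set z : ℝ := ((3*j+1)/3^n + (3*j+2)/3^n) / 2 with hz
    have hz1 : (3*(j:ℝ)+1)/3^n < z := by rw [hz]; linarith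
    have hz2 : z < (3*(j:ℝ)+2)/3^n := by rw [hz]; linarith
    have hzK : z ∈ closure B2 := by
      apply hclsub
      apply hUsub (hIco ⟨by linarith, by linarith⟩)
    rw [mem_closure_iff] at hzK
    obtain ⟨w, hw1, hw2⟩ := hzK (Set.Ioo ((3*j+1)/3^n) ((3*j+2)/3^n)) isOpen_Ioo ⟨hz1, hz2⟩
    exact not_mem_B2 n j w hw1.1 hw1.2 hw2
  · -- discrete subspace homeomorphic to ℕ
    have hbot : TopologicalSpace.induced ((↑) : B2 → ℝ) (hattori A2) = ⊥ := by
      apply eq_bot_of_singletons_open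
      intro x
      obtain ⟨U, hUopen, hUx⟩ := B2_isolated x.1 x.2
      refine ⟨U, hUopen, ?_⟩
      ext z
      simp only [Set.mem_preimage, Set.mem_singleton_iff]
      constructor
      · intro hzU
        have h1 : (z : ℝ) ∈ U ∩ B2 := ⟨hzU, z.2⟩
        rw [hUx] at h1
        exact Subtype.ext h1
      · rintro rfl
        have h1 : (z : ℝ) ∈ U ∩ B2 := by rw [hUx]; rfl
        exact h1.1
    rw [hbot]
    have : Countable ↥B2 := B2_countable.to_subtype
    have : Infinite ↥B2 := B2_infinite.to_subtype
    obtain ⟨d⟩ := nonempty_denumerable ↥B2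
    exact ⟨@Homeomorph.mk ↥B2 ℕ ⊥ ⊥ (Denumerable.eqv ↥B2)
      (@continuous_bot _ _ _ ⊥) (@continuous_bot _ _ _ ⊥)⟩
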